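/- A monic polynomial f ∈ ℝ[t] of degree d has all its complex roots real if and only if its Hermite matrix H(f), the d×d real symmetric matrix whose (i,j) entry is the (i+j-2)-th power sum of the complex roots of f, is positive semidefinite. -/

import Mathlib

open Polynomial Complex

lemma multiset_sum_comm {α β M : Type*} [AddCommMonoid M] (s : Finset β) (m : Multiset α)
    (f : β → α → M) :
    ∑ i ∈ s, (m.map (f i)).sum = (m.map (fun a => ∑ i ∈ s, f i a)).sum := by
  induction m using Multiset.induction with
  | empty => simp
  | cons a t ih => simp [Finset.sum_add_distrib, ih]

lemma multiset_sum_nonpos {m : Multiset ℝ} (h : ∀ a ∈ m, a ≤ 0) : m.sum ≤ 0 := by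
  induction m using Multiset.induction with
  | empty => simp
  | cons a t ih =>
    rw [Multiset.sum_cons]
    have h1 := h a (Multiset.mem_cons_self a t)
    have h2 := ih (fun b hb => h b (Multiset.mem_cons_of_mem hb))
    linarith

lemma hermite_quadform (d : ℕ) (R : Multiset ℂ) (H : Matrix (Fin d) (Fin d) ℝ)
    (hH : ∀ i j : Fin d, (H i j : ℂ) = (R.map (fun r => r ^ ((i : ℕ) + (j : ℕ)))).sum)
    (x : Fin d → ℝ) :
    ((dotProduct x (H.mulVec x) : ℝ) : ℂ)
      = (R.map (fun r => (∑ i : Fin d, (x i : ℂ) * r ^ (i : ℕ)) ^ 2)).sum := by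
  have hexp : ∀ r : ℂ, (∑ i : Fin d, (x i : ℂ) * r ^ (i : ℕ)) ^ 2
      = ∑ i : Fin d, ∑ j : Fin d, (x i : ℂ) * ((x j : ℂ) * r ^ ((i : ℕ) + (j : ℕ))) := by
    intro r
    rw [sq, Finset.sum_mul_sum]
    refine Finset.sum_congr rfl fun i _ => Finset.sum_congr rfl fun j _ => ?_
    rw [pow_add]; ring
  simp only [hexp]
  rw [← multiset_sum_comm]
  simp only [dotProduct, Matrix.mulVec]
  push_cast
  refine Finset.sum_congr rfl fun i _ => ?_
  rw [← multiset_sum_comm, Finset.mul_sum]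
  refine Finset.sum_congr rfl fun j _ => ?_
  rw [Multiset.sum_map_mul_left, Multiset.sum_map_mul_left, hH i j]
  ring

/-- A real univariate polynomial is real-rooted if all its complex roots are real. -/
def RealRooted (p : Polynomial ℝ) : Prop :=
  ∀ z : ℂ, Polynomial.aeval z p = 0 → z.im = 0

/-- A monic real polynomial of degree `d` is real-rooted if and only if its Hermite
matrix (the `d × d` real symmetric matrix whose `(i,j)` entry is the `(i+j)`-th power sum
of the complex roots of `f`, indexing from `0`) is positive semidefinite. -/
theorem hermite_posSemidef_iff_realRooted (d : ℕ) (hd : 0 < d)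
    (f : Polynomial ℝ) (hmonic : f.Monic) (hdeg : f.natDegree = d)
    (H : Matrix (Fin d) (Fin d) ℝ)
    (hH : ∀ i j : Fin d,
      (H i j : ℂ) =
        (((f.map (algebraMap ℝ ℂ)).roots.map (fun r => r ^ ((i : ℕ) + (j : ℕ)))).sum)) :
    RealRooted f ↔ H.PosSemidef := by
  set F := f.map (algebraMap ℝ ℂ) with hFdef
  have hF0 : F ≠ 0 := (hmonic.map (algebraMap ℝ ℂ)).ne_zero
  constructor
  · intro hreal
    refine Matrix.posSemidef_iff_dotProduct_mulVec.mpr ⟨?_, ?_⟩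
    · refine Matrix.IsHermitian.ext fun i j => ?_
      rw [star_trivial]
      have h2 : ((H j i : ℝ) : ℂ) = ((H i j : ℝ) : ℂ) := by rw [hH j i, hH i j, add_comm]
      exact_mod_cast h2
    · intro x
      rw [star_trivial]
      set Q : ℝ := dotProduct x (H.mulVec x) with hQ
      have hkey := hermite_quadform d F.roots H hH x
      rw [← hQ] at hkey
      have hre : (0 : ℝ) ≤ ((Q : ℂ)).re := by
        rw [hkey]
        have h1 : ∀ (M : Multiset ℂ), M.sum.re = (M.map Complex.re).sum := fun M => by
          simpa using map_multiset_sum Complex.reAddGroupHom M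
        rw [h1, Multiset.map_map]
        refine Multiset.sum_nonneg ?_
        intro a ha
        obtain ⟨r, hr, rfl⟩ := Multiset.mem_map.mp ha
        have hrim : r.im = 0 := by
          apply hreal
          rw [aeval_def, ← eval_map]
          exact (mem_roots hF0).mp hr
        obtain ⟨y, rfl⟩ : ∃ y : ℝ, (y : ℂ) = r := ⟨r.re, Complex.ext (by simp) (by simp [hrim])⟩
        have h3 : (∑ i : Fin d, (x i : ℂ) * (y : ℂ) ^ (i : ℕ))
            = (((∑ i : Fin d, x i * y ^ (i : ℕ) : ℝ)) : ℂ) := by push_cast; rfl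
        simp only [Function.comp_apply]
        rw [h3, ← Complex.ofReal_pow, Complex.ofReal_re]
        positivity
      simpa using hre
  · intro hpsd z hz
    by_contra him
    -- z is a non-real root; build a vector with negative quadratic form
    have hzF : F.eval z = 0 := by rwa [hFdef, eval_map, ← aeval_def]
    have hzbarF : F.eval ((starRingEnd ℂ) z) = 0 := by
      rw [hFdef, eval_map, ← aeval_def, Polynomial.aeval_conj, hz, map_zero]
    have hzne : z ≠ (starRingEnd ℂ) z := fun h => him (Complex.conj_eq_iff_im.mp h.symm)
    set m : ℕ := Polynomial.rootMultiplicity z F with hm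
    have hm1 : 1 ≤ m := (Polynomial.rootMultiplicity_pos hF0).mpr hzF
    have hdvd1 : (X - C z) ^ m ∣ F := Polynomial.pow_rootMultiplicity_dvd F z
    have hmapF : F.map (starRingEnd ℂ) = F := by
      rw [hFdef, Polynomial.map_map]
      congr 1
      exact RingHom.ext fun r => Complex.conj_ofReal r
    have hdvd2 : (X - C ((starRingEnd ℂ) z)) ^ m ∣ F := by
      have := Polynomial.map_dvd (starRingEnd ℂ) hdvd1
      rwa [Polynomial.map_pow, Polynomial.map_sub, Polynomial.map_X, Polynomial.map_C,
        hmapF] at this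
    have hcop : IsCoprime ((X - C z : ℂ[X]) ^ m) ((X - C ((starRingEnd ℂ) z)) ^ m) :=
      (isCoprime_X_sub_C_of_isUnit_sub ((sub_ne_zero.2 hzne).isUnit)).pow
    have hdvd : ((X - C z) * (X - C ((starRingEnd ℂ) z))) ^ m ∣ F := by
      rw [mul_pow]; exact hcop.mul_dvd hdvd1 hdvd2
    -- the real quadratic factor
    set g : ℝ[X] := X ^ 2 - C (2 * z.re) * X + C (z.re ^ 2 + z.im ^ 2) with hg
    have hgmap : g.map (algebraMap ℝ ℂ) = (X - C z) * (X - C ((starRingEnd ℂ) z)) := by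
      have h1 : ((2 * z.re : ℝ) : ℂ) = z + (starRingEnd ℂ) z := by
        rw [Complex.add_conj]
      have h2 : ((z.re ^ 2 + z.im ^ 2 : ℝ) : ℂ) = z * (starRingEnd ℂ) z := by
        rw [Complex.mul_conj, Complex.normSq_apply]; push_cast; ring
      simp only [hg, Polynomial.map_add, Polynomial.map_sub, Polynomial.map_pow,
        Polynomial.map_mul, Polynomial.map_X, map_C, Complex.coe_algebraMap]
      rw [h1, h2, C_add, C_mul]
      ring
    have hgdvd : g ^ m ∣ f := by
      rw [← map_dvd_map' (algebraMap ℝ ℂ)]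
      rwa [Polynomial.map_pow, hgmap]
    obtain ⟨q, hq⟩ := hgdvd
    have hq0 : q ≠ 0 := by
      intro h
      exact hmonic.ne_zero (by rw [hq, h, mul_zero])
    have hgdeg : g.natDegree = 2 := by rw [hg]; compute_degree!
    have hg0 : g ≠ 0 := fun h => by simp [h] at hgdeg
    have hd2m : d = 2 * m + q.natDegree := by
      rw [← hdeg, hq, natDegree_mul (pow_ne_zero _ hg0) hq0, natDegree_pow, hgdeg]
      ring
    set Qc : ℂ[X] := q.map (algebraMap ℝ ℂ) with hQc
    have hFQ : F = ((X - C z) ^ m * (X - C ((starRingEnd ℂ) z)) ^ m) * Qc := by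
      rw [hFdef, hq, Polynomial.map_mul, Polynomial.map_pow, hgmap, mul_pow]
    have hQz : Qc.eval z ≠ 0 := by
      intro h
      apply Polynomial.pow_rootMultiplicity_not_dvd hF0 z
      rw [← hm, pow_succ, hFQ]
      have hdq : (X - C z) ∣ Qc := Polynomial.dvd_iff_isRoot.mpr h
      calc (X - C z) ^ m * (X - C z)
          ∣ (X - C z) ^ m * ((X - C ((starRingEnd ℂ) z)) ^ m * Qc) :=
            mul_dvd_mul_left _ (hdq.mul_left _)
        _ = (X - C z) ^ m * (X - C ((starRingEnd ℂ) z)) ^ m * Qc := by ring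
    -- choose the linear factor
    set w : ℂ := Complex.I / Qc.eval z with hw
    set b : ℝ := w.im / z.im with hb
    set a : ℝ := w.re - b * z.re with ha
    have hab : (b : ℂ) * z + (a : ℂ) = w := by
      apply Complex.ext
      · simp [ha]
      · simp [hb, div_mul_cancel₀ _ him]
    set p : ℝ[X] := (C b * X + C a) * q with hp
    set Pc : ℂ[X] := p.map (algebraMap ℝ ℂ) with hPc
    have hPcq : Pc = (C (b : ℂ) * X + C (a : ℂ)) * Qc := by
      rw [hPc, hp, Polynomial.map_mul, Polynomial.map_add, Polynomial.map_mul,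
        Polynomial.map_X, map_C, map_C]
      simp only [Complex.coe_algebraMap, hQc]
    have hpd : p.natDegree < d := by
      have h1 : p.natDegree ≤ 1 + q.natDegree := by
        refine (natDegree_mul_le).trans ?_
        exact Nat.add_le_add_right (natDegree_linear_le) _
      omega
    have hPz : Pc.eval z = Complex.I := by
      rw [hPcq]
      simp only [eval_mul, eval_add, eval_mul, eval_C, eval_X]
      rw [hab, hw, div_mul_cancel₀ _ hQz]
    have hPzbar : Pc.eval ((starRingEnd ℂ) z) = -Complex.I := by
      have h1 : (aeval ((starRingEnd ℂ) z)) p = (starRingEnd ℂ) ((aeval z) p) :=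
        Polynomial.aeval_conj p z
      rw [aeval_def, aeval_def, ← eval_map, ← eval_map, ← hPc] at h1
      rw [h1, hPz, Complex.conj_I]
    have hProot : ∀ r : ℂ, r ≠ z → r ≠ (starRingEnd ℂ) z → F.eval r = 0 → Pc.eval r = 0 := by
      intro r h1 h2 h3
      have hQr : Qc.eval r = 0 := by
        rw [hFQ] at h3
        simp only [eval_mul, eval_pow, eval_sub, eval_X, eval_C] at h3
        rcases mul_eq_zero.mp h3 with h | h
        · rcases mul_eq_zero.mp h with h' | h'
          · exact absurd (sub_eq_zero.mp (pow_eq_zero_iff (by omega) |>.mp h')) h1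
          · exact absurd (sub_eq_zero.mp (pow_eq_zero_iff (by omega) |>.mp h')) h2
        · exact h
      rw [hPcq, eval_mul, hQr, mul_zero]
    -- the witness vector
    set x : Fin d → ℝ := fun i => p.coeff i with hx
    have heval : ∀ r : ℂ, (∑ i : Fin d, ((x i : ℂ)) * r ^ (i : ℕ)) = Pc.eval r := by
      intro r
      have hPd : Pc.natDegree < d := lt_of_le_of_lt natDegree_map_le hpd
      rw [Polynomial.eval_eq_sum_range' hPd, ← Fin.sum_univ_eq_sum_range]
      refine Finset.sum_congr rfl fun i _ => ?_
      rw [hPc, Polynomial.coeff_map]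
      rfl
    have hkey := hermite_quadform d F.roots H hH x
    simp only [heval] at hkey
    -- identify the sum
    have hcong : F.roots.map (fun r => (Pc.eval r) ^ 2)
        = F.roots.map (fun r =>
            (((if r = z ∨ r = (starRingEnd ℂ) z then (-1 : ℝ) else 0) : ℝ) : ℂ)) := by
      refine Multiset.map_congr rfl fun r hr => ?_
      have hroot : F.eval r = 0 := (mem_roots hF0).mp hr
      by_cases h1 : r = z
      · subst h1; rw [hPz]; simp [Complex.I_sq]
      · by_cases h2 : r = (starRingEnd ℂ) z
        · subst h2; rw [hPzbar]; simp [Complex.I_sq]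
        · rw [hProot r h1 h2 hroot]; simp [h1, h2]
    rw [hcong] at hkey
    have hcast : (F.roots.map (fun r =>
        (((if r = z ∨ r = (starRingEnd ℂ) z then (-1 : ℝ) else 0) : ℝ) : ℂ))).sum
        = (((F.roots.map (fun r =>
            (if r = z ∨ r = (starRingEnd ℂ) z then (-1 : ℝ) else 0))).sum : ℝ) : ℂ) := by
      have h5 := (map_multiset_sum Complex.ofRealHom (F.roots.map
        (fun r => (if r = z ∨ r = (starRingEnd ℂ) z then (-1 : ℝ) else 0)))).symm
      rw [Multiset.map_map] at h5
      simpa using h5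
    rw [hcast] at hkey
    have hQval : dotProduct x (H.mulVec x)
        = (F.roots.map (fun r => (if r = z ∨ r = (starRingEnd ℂ) z then (-1 : ℝ) else 0))).sum :=
      Complex.ofReal_injective hkey
    -- the sum is negative
    have hzmem : z ∈ F.roots := (mem_roots hF0).mpr hzF
    obtain ⟨T, hT⟩ := Multiset.exists_cons_of_mem hzmem
    have hneg : (F.roots.map (fun r =>
        (if r = z ∨ r = (starRingEnd ℂ) z then (-1 : ℝ) else 0))).sum < 0 := by
      rw [hT, Multiset.map_cons, Multiset.sum_cons]
      have h1 : (if z = z ∨ z = (starRingEnd ℂ) z then (-1 : ℝ) else 0) = -1 := by simp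
      rw [h1]
      have h2 : (T.map (fun r =>
          (if r = z ∨ r = (starRingEnd ℂ) z then (-1 : ℝ) else 0))).sum ≤ 0 := by
        refine multiset_sum_nonpos fun c hc => ?_
        obtain ⟨r, _, rfl⟩ := Multiset.mem_map.mp hc
        split <;> norm_num
      linarith
    have := hpsd.dotProduct_mulVec_nonneg x
    rw [star_trivial, hQval] at this
    exact absurd this (not_le.mpr hneg)
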